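/- Let X ∪ {t} be a finite normalized set of terms, let st := st(X ∪ {t}) and N := |st|. For Y ⊆ st define one-step(Y) := Y ∪ {u ∈ st : u is the conclusion of a rule instance all of whose premises lie in Y}, and set Y_0 := X and Y_{i+1} := one-step(Y_i) for i ≥ 0. Then Y_i = Y_N for all i ≥ N, and X ⊢_dy t if and only if t ∈ Y_N. -/

import Mathlib

/- A formalization of the Dolev-Yao intruder model with XOR, following
"Protocol insecurity with finitely many sessions and XOR".
Multisets of terms (for the XOR operator) are represented by lists;
the normal form of an XOR term is represented canonically by sorting the
(normalized) factors in a fixed linear order (via an injective encoding of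
terms into ℕ) and cancelling pairs of equal factors (nilpotence). -/

namespace DYXor

/-- Terms: variables, names (with the distinguished names `0` and `secret`,
and keys among the names), public keys, pairs, symmetric and asymmetric
encryptions, and XORs of (multi)sets of terms. -/
inductive Term : Type where
  | var : ℕ → Term
  | name : ℕ → Term
  | pk : Term → Term
  | pair : Term → Term → Term
  | senc : Term → Term → Term
  | aenc : Term → Term → Term
  | xor : List Term → Term

/-- The distinguished name `0`, the unit of XOR. -/
def Term.zero : Term := .name 0

/-- The distinguished name `secret`. -/
def Term.secret : Term := .name 1

/-- A term is standard if it is not an XOR term. -/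
def Term.IsStandard : Term → Prop
  | .xor _ => False
  | _ => True

/-- The factors of a term, as a list (representing a multiset):
`fac(t) = {t}` for standard `t`, and the multiset union of the factors of the
members for an XOR term. -/
def facL : Term → List Term
  | .var x => [.var x]
  | .name a => [.name a]
  | .pk u => [.pk u]
  | .pair u v => [.pair u v]
  | .senc u v => [.senc u v]
  | .aenc u v => [.aenc u v]
  | .xor M => M.attach.flatMap fun u => facL u.1
decreasing_by
  have := List.sizeOf_lt_of_mem u.2
  simp only [Term.xor.sizeOf_spec]
  omega

/-- An injective encoding of terms into ℕ, fixing a canonical linear order on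
terms. -/
def encode : Term → ℕ
  | .var x => Nat.pair 0 x + 1
  | .name a => Nat.pair 1 a + 1
  | .pk u => Nat.pair 2 (encode u) + 1
  | .pair u v => Nat.pair 3 (Nat.pair (encode u) (encode v)) + 1
  | .senc u v => Nat.pair 4 (Nat.pair (encode u) (encode v)) + 1
  | .aenc u v => Nat.pair 5 (Nat.pair (encode u) (encode v)) + 1
  | .xor M => Nat.pair 6 ((M.attach.map fun u => encode u.1).foldr (fun a b => Nat.pair a b + 1) 0) + 1
decreasing_by
  all_goals first
  | (have := List.sizeOf_lt_of_mem u.2; simp only [Term.xor.sizeOf_spec]; omega)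
  | (simp only [Term.pk.sizeOf_spec, Term.pair.sizeOf_spec, Term.senc.sizeOf_spec,
      Term.aenc.sizeOf_spec]; omega)

/-- Sort a list of terms in the canonical order. -/
def sortT (l : List Term) : List Term :=
  l.mergeSort fun a b => Nat.ble (encode a) (encode b)

/-- On a (sorted) list, remove pairs of equal adjacent elements, keeping
exactly the elements that occur an odd number of times (nilpotence of ⊕). -/
def cancel : List Term → List Term
  | [] => []
  | [a] => [a]
  | a :: b :: rest =>
      if encode a = encode b then cancel rest else a :: cancel (b :: rest)

/-- `xorOf B` is the term `⊕B`, with the conventions `⊕∅ := 0` and `⊕{t} := t`. -/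
def xorOf : List Term → Term
  | [] => Term.zero
  | [t] => t
  | l => .xor l

theorem sizeOf_le_of_mem_facL : ∀ (t : Term), ∀ u ∈ facL t, sizeOf u ≤ sizeOf t
  | .xor M => by
    intro u hu
    rw [facL] at hu
    simp only [List.mem_flatMap, List.mem_attach, true_and] at hu
    obtain ⟨⟨m, hm⟩, hu⟩ := hu
    have h1 : sizeOf u ≤ sizeOf m := sizeOf_le_of_mem_facL m u hu
    have h2 := List.sizeOf_lt_of_mem hm
    simp only [Term.xor.sizeOf_spec]
    omega
  | .var x => by intro u hu; rw [facL] at hu; simp at hu; simp [hu]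
  | .name a => by intro u hu; rw [facL] at hu; simp at hu; simp [hu]
  | .pk v => by intro u hu; rw [facL] at hu; simp at hu; simp [hu]
  | .pair v w => by intro u hu; rw [facL] at hu; simp at hu; simp [hu]
  | .senc v w => by intro u hu; rw [facL] at hu; simp at hu; simp [hu]
  | .aenc v w => by intro u hu; rw [facL] at hu; simp at hu; simp [hu]
decreasing_by
  all_goals (have := List.sizeOf_lt_of_mem hm; simp only [Term.xor.sizeOf_spec]; omega)

theorem sizeOf_lt_of_mem_facL_xor (M : List Term) :
    ∀ u ∈ facL (.xor M), sizeOf u < sizeOf (Term.xor M) := by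
  intro u hu
  rw [facL] at hu
  simp only [List.mem_flatMap, List.mem_attach, true_and] at hu
  obtain ⟨⟨m, hm⟩, hu⟩ := hu
  have h1 := sizeOf_le_of_mem_facL m u hu
  have h2 := List.sizeOf_lt_of_mem hm
  simp only [Term.xor.sizeOf_spec]
  omega

/-- The normal form `nf(t)` of a term, implementing associativity,
commutativity, the unit `0` and nilpotence of ⊕: the normal form of an XOR
term `r` is the XOR of the *set* of those terms `v` such that the number of
factors `u ∈ fac(r)` with `nf(u) = v` is odd (represented canonically as a
sorted list). -/
def nf : Term → Term
  | .var x => .var x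
  | .name a => .name a
  | .pk u => .pk (nf u)
  | .pair u v => .pair (nf u) (nf v)
  | .senc u v => .senc (nf u) (nf v)
  | .aenc u v => .aenc (nf u) (nf v)
  | .xor M => xorOf (cancel (sortT ((facL (.xor M)).attach.map fun u => nf u.1)))
decreasing_by
  all_goals first
  | (exact sizeOf_lt_of_mem_facL_xor M u.1 u.2)
  | (simp only [Term.pk.sizeOf_spec, Term.pair.sizeOf_spec, Term.senc.sizeOf_spec,
      Term.aenc.sizeOf_spec]; omega)

/-- A term is normalized if it equals its normal form. -/
def Term.Normalized (t : Term) : Prop := nf t = t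

/-- Application of a substitution (a map from variables to terms, the identity
outside its domain), extended homomorphically to all terms. -/
def subst (σ : ℕ → Term) : Term → Term
  | .var x => σ x
  | .name a => .name a
  | .pk u => .pk (subst σ u)
  | .pair u v => .pair (subst σ u) (subst σ v)
  | .senc u v => .senc (subst σ u) (subst σ v)
  | .aenc u v => .aenc (subst σ u) (subst σ v)
  | .xor M => .xor (M.attach.map fun u => subst σ u.1)
decreasing_by
  all_goals first
  | (have := List.sizeOf_lt_of_mem u.2; simp only [Term.xor.sizeOf_spec]; omega)
  | (simp only [Term.pk.sizeOf_spec, Term.pair.sizeOf_spec, Term.senc.sizeOf_spec,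
      Term.aenc.sizeOf_spec]; omega)

/-- `IsFactor u t`: `u` occurs in the multiset `fac(t)` of factors of `t`. -/
inductive IsFactor : Term → Term → Prop where
  | std {t : Term} : t.IsStandard → IsFactor t t
  | xor {t u : Term} {M : List Term} : u ∈ M → IsFactor t u → IsFactor t (.xor M)

/-- The subterm relation: `Subterm u t` iff `u ∈ st(t)`. -/
inductive Subterm : Term → Term → Prop where
  | refl (t : Term) : Subterm t t
  | pk {s u : Term} : Subterm s u → Subterm s (.pk u)
  | pair_l {s u v : Term} : Subterm s u → Subterm s (.pair u v)
  | pair_r {s u v : Term} : Subterm s v → Subterm s (.pair u v)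
  | senc_l {s u v : Term} : Subterm s u → Subterm s (.senc u v)
  | senc_r {s u v : Term} : Subterm s v → Subterm s (.senc u v)
  | aenc_l {s u v : Term} : Subterm s u → Subterm s (.aenc u v)
  | aenc_r {s u v : Term} : Subterm s v → Subterm s (.aenc u v)
  | xor {s u : Term} {M : List Term} :
      IsFactor u (.xor M) → Subterm s u → Subterm s (.xor M)

/-- `st(t)` as a set of terms. -/
def stT (t : Term) : Set Term := {u | Subterm u t}

/-- `st(X)` for a set of terms `X`. -/
def stSet (X : Set Term) : Set Term := {u | ∃ t ∈ X, Subterm u t}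

/-- The variables occurring in a term. -/
def varsT (t : Term) : Set ℕ := {x | Subterm (.var x) t}

/-- A term is ground if no variable occurs in it. -/
def Ground (t : Term) : Prop := ∀ x : ℕ, ¬ Subterm (.var x) t

/-- The rules of the Dolev-Yao derivation system. -/
inductive Rule : Type where
  | ax | split1 | split2 | sdec | adec | pkR | pairR | sencR | aencR | xorR
  deriving DecidableEq

/-- Proof trees: each node carries a term (its conclusion) and a rule. -/
inductive PTree : Type where
  | node : Term → Rule → List PTree → PTree

/-- The conclusion of a proof: the term at its root. -/
def PTree.conc : PTree → Term
  | .node t _ _ => t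

/-- The last rule of a proof: the rule at its root. -/
def PTree.rule : PTree → Rule
  | .node _ r _ => r

/-- `IsProof X π` says that `π` is a derivation (proof) of `X ⊢ conc(π)`:
every node is labelled by a normalized term and is a correct instance of a
Dolev-Yao rule, and `ax`-leaves are labelled by terms of `X`. -/
inductive IsProof (X : Set Term) : PTree → Prop where
  | ax {t : Term} : t ∈ X → nf t = t → IsProof X (.node t .ax [])
  | split1 {t u : Term} {δ : PTree} :
      IsProof X δ → δ.conc = .pair t u → IsProof X (.node t .split1 [δ])
  | split2 {t u : Term} {δ : PTree} :
      IsProof X δ → δ.conc = .pair t u → IsProof X (.node u .split2 [δ])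
  | sdec {t v : Term} {δ₁ δ₂ : PTree} :
      IsProof X δ₁ → IsProof X δ₂ → δ₁.conc = .senc t v → δ₂.conc = v →
      IsProof X (.node t .sdec [δ₁, δ₂])
  | adec {t : Term} {k : ℕ} {δ₁ δ₂ : PTree} :
      IsProof X δ₁ → IsProof X δ₂ → δ₁.conc = .aenc t (.pk (.name k)) →
      δ₂.conc = .name k → IsProof X (.node t .adec [δ₁, δ₂])
  | pkR {k : ℕ} {δ : PTree} :
      IsProof X δ → δ.conc = .name k → IsProof X (.node (.pk (.name k)) .pkR [δ])
  | pairR {δ₁ δ₂ : PTree} :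
      IsProof X δ₁ → IsProof X δ₂ →
      IsProof X (.node (.pair δ₁.conc δ₂.conc) .pairR [δ₁, δ₂])
  | sencR {δ₁ δ₂ : PTree} :
      IsProof X δ₁ → IsProof X δ₂ →
      IsProof X (.node (.senc δ₁.conc δ₂.conc) .sencR [δ₁, δ₂])
  | aencR {k : ℕ} {δ₁ δ₂ : PTree} :
      IsProof X δ₁ → IsProof X δ₂ → δ₂.conc = .pk (.name k) →
      IsProof X (.node (.aenc δ₁.conc (.pk (.name k))) .aencR [δ₁, δ₂])
  | xorR {l : List PTree} :
      (∀ δ ∈ l, IsProof X δ) →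
      IsProof X (.node (nf (.xor (l.map PTree.conc))) .xorR l)

/-- `X ⊢_dy t`: there is a proof of `X ⊢ t`. -/
def Derives (X : Set Term) (t : Term) : Prop :=
  ∃ π : PTree, IsProof X π ∧ π.conc = t

/-- The subproof (subtree) relation on proof trees. -/
inductive Subproof : PTree → PTree → Prop where
  | refl (π : PTree) : Subproof π π
  | child {π δ : PTree} {t : Term} {r : Rule} {l : List PTree} :
      δ ∈ l → Subproof π δ → Subproof π (.node t r l)

/-- `terms(π)`: the set of terms labelling the nodes of `π`. -/
def termsOf (π : PTree) : Set Term := {u | ∃ δ : PTree, Subproof δ π ∧ δ.conc = u}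

/-- `axioms(π)`: the set of terms labelling the `ax`-leaves of `π`. -/
def axiomsOf (π : PTree) : Set Term :=
  {u | ∃ δ : PTree, Subproof δ π ∧ δ.rule = .ax ∧ δ.conc = u}

/-- The constructor rules `pk`, `pair`, `senc`, `aenc`. -/
def Rule.IsConstructor (r : Rule) : Prop :=
  r = .pkR ∨ r = .pairR ∨ r = .sencR ∨ r = .aencR

/-- The destructor rules `split`, `sdec`, `adec` (excluding `xor_d`). -/
def Rule.IsBasicDestructor (r : Rule) : Prop :=
  r = .split1 ∨ r = .split2 ∨ r = .sdec ∨ r = .adec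

/-- A proof ends in a destructor if its last rule is `split`/`sdec`/`adec`,
or is an `xor` with standard conclusion (`xor_d`). -/
def PTree.EndsInDestructor (π : PTree) : Prop :=
  π.rule.IsBasicDestructor ∨ (π.rule = .xorR ∧ π.conc.IsStandard)

/-- Normal proofs: (1) no occurrence of `split`/`sdec`/`adec` has its leftmost
(major) premise derived by a constructor rule; (2) in every occurrence of the
`xor` rule, no two premises are equal, no premise equals the conclusion, and no
premise is derived by an `xor` rule. -/
inductive Normal : PTree → Prop where
  | mk {t : Term} {r : Rule} {l : List PTree} :
      (∀ δ ∈ l, Normal δ) →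
      (r.IsBasicDestructor → ∀ δ₁ ∈ l.head?, ¬ δ₁.rule.IsConstructor) →
      (r = .xorR →
        (l.map PTree.conc).Nodup ∧ (∀ δ ∈ l, δ.conc ≠ t) ∧ (∀ δ ∈ l, δ.rule ≠ .xorR)) →
      Normal (.node t r l)

/-- `RuleStep Y u`: `u` is the conclusion of a rule instance all of whose
premises lie in `Y`. -/
inductive RuleStep (Y : Set Term) : Term → Prop where
  | split1 {t u : Term} : Term.pair t u ∈ Y → RuleStep Y t
  | split2 {t u : Term} : Term.pair t u ∈ Y → RuleStep Y u
  | sdec {t v : Term} : Term.senc t v ∈ Y → v ∈ Y → RuleStep Y t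
  | adec {t : Term} {k : ℕ} : Term.aenc t (.pk (.name k)) ∈ Y → Term.name k ∈ Y → RuleStep Y t
  | pkR {k : ℕ} : Term.name k ∈ Y → RuleStep Y (.pk (.name k))
  | pairR {u v : Term} : u ∈ Y → v ∈ Y → RuleStep Y (.pair u v)
  | sencR {u v : Term} : u ∈ Y → v ∈ Y → RuleStep Y (.senc u v)
  | aencR {u : Term} {k : ℕ} : u ∈ Y → Term.pk (.name k) ∈ Y → RuleStep Y (.aenc u (.pk (.name k)))
  | xorR {l : List Term} : (∀ s ∈ l, s ∈ Y) → RuleStep Y (nf (.xor l))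

/-- `one-step(Y)` relative to the ambient set `st`. -/
def oneStep (st : Set Term) (Y : Set Term) : Set Term :=
  Y ∪ {u ∈ st | RuleStep Y u}

/-- Relabel every node of a proof tree by applying `g` to its term. -/
def mapTree (g : Term → Term) : PTree → PTree
  | .node t r l => .node (g t) r (l.attach.map fun d => mapTree g d.1)
decreasing_by
  have := List.sizeOf_lt_of_mem d.2
  simp only [PTree.node.sizeOf_spec]
  omega

attribute [local instance] Classical.propDecidable

/-- `zap` relative to a set `T` of terms (to be instantiated with `nf(Dσ)`):
`zap(a) = a` for atomic `a`; `zap(t) = 0` for zappable `t` (a non-atomic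
standard term with `nf(t) ∉ T`); otherwise `zap` is applied to the arguments
and the result is normalized. -/
noncomputable def zap (T : Set Term) : Term → Term
  | .var x => .var x
  | .name a => .name a
  | .pk u => if nf (.pk u) ∈ T then nf (.pk (zap T u)) else Term.zero
  | .pair u v => if nf (.pair u v) ∈ T then nf (.pair (zap T u) (zap T v)) else Term.zero
  | .senc u v => if nf (.senc u v) ∈ T then nf (.senc (zap T u) (zap T v)) else Term.zero
  | .aenc u v => if nf (.aenc u v) ∈ T then nf (.aenc (zap T u) (zap T v)) else Term.zero
  | .xor M => nf (.xor (M.attach.map fun u => zap T u.1))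
decreasing_by
  all_goals first
  | (have := List.sizeOf_lt_of_mem u.2; simp only [Term.xor.sizeOf_spec]; omega)
  | (simp only [Term.pk.sizeOf_spec, Term.pair.sizeOf_spec, Term.senc.sizeOf_spec,
      Term.aenc.sizeOf_spec]; omega)

/-- A proof is typed if each of its subproofs either ends in a constructor
rule, or has a typed conclusion (a member of `T = nf(Dσ)`), or has a
non-standard conclusion. -/
def TypedProof (T : Set Term) (π : PTree) : Prop :=
  ∀ δ : PTree, Subproof δ π → δ.rule.IsConstructor ∨ δ.conc ∈ T ∨ ¬ δ.conc.IsStandard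

/-- A role: initial knowledge together with a sequence of (receive, send) pairs. -/
structure Role : Type where
  know : Set Term
  seq : List (Term × Term)

/-- The variables of a list of (receive, send) pairs. -/
def varsRS (ρ : List (Term × Term)) : Set ℕ :=
  {x | ∃ p ∈ ρ, Subterm (.var x) p.1 ∨ Subterm (.var x) p.2}

/-- The agent variables of a role sequence: the variables that first occur in
a send, i.e. `⋃_i (vars(s_i) \ vars({r_1, …, r_i}))`. -/
def varsA (ρ : List (Term × Term)) : Set ℕ :=
  {x | ∃ i : Fin ρ.length, Subterm (.var x) (ρ.get i).2 ∧
        ∀ j : Fin ρ.length, j.1 ≤ i.1 → ¬ Subterm (.var x) (ρ.get j).1}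

/-- The intruder variables of a role sequence. -/
def varsI (ρ : List (Term × Term)) : Set ℕ := varsRS ρ \ varsA ρ

/-- Well-formed roles: the initial knowledge is a finite set of standard
normalized terms whose variables are agent variables, and every send is
derivable from the initial knowledge together with the receives up to that
point. -/
def Role.WF (R : Role) : Prop :=
  R.know.Finite ∧
  (∀ t ∈ R.know, t.IsStandard ∧ nf t = t) ∧
  (∀ t ∈ R.know, ∀ x : ℕ, Subterm (.var x) t → x ∈ varsA R.seq) ∧
  ∀ i : Fin R.seq.length,
    Derives (R.know ∪ {u | ∃ j : Fin R.seq.length, j.1 ≤ i.1 ∧ u = (R.seq.get j).1})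
      (R.seq.get i).2

/-- A protocol: the intruder's initial knowledge and a finite list of roles. -/
structure Protocol : Type where
  init : Set Term
  roles : List Role

/-- Well-formed protocols: the initial knowledge is a finite set of normalized
ground terms, and all roles are well-formed. -/
def Protocol.WF (P : Protocol) : Prop :=
  P.init.Finite ∧ (∀ t ∈ P.init, nf t = t ∧ Ground t) ∧ ∀ R ∈ P.roles, R.WF

/-- The instantiation `ρτ` of a role sequence by a substitution. -/
def instSeq (R : Role) (τ : ℕ → Term) : List (Term × Term) :=
  R.seq.map fun p => (subst τ p.1, subst τ p.2)

/-- A session of a protocol: a role together with a substitution sending agent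
variables to names and intruder variables to variables, with the instantiated
sequence consisting of normalized terms. -/
def IsSession (P : Protocol) (R : Role) (τ : ℕ → Term) : Prop :=
  R ∈ P.roles ∧
  (∀ x ∈ varsA R.seq, ∃ a : ℕ, τ x = .name a) ∧
  (∀ x ∈ varsI R.seq, ∃ y : ℕ, τ x = .var y) ∧
  (∀ p ∈ instSeq R τ, nf p.1 = p.1 ∧ nf p.2 = p.2)

/-- Two sessions are coherent if their instantiated sequences share no variables. -/
def Coherent (s₁ s₂ : Role × (ℕ → Term)) : Prop :=
  ∀ x : ℕ, ¬ (x ∈ varsRS (instSeq s₁.1 s₁.2) ∧ x ∈ varsRS (instSeq s₂.1 s₂.2))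

/-- `Interleave ls l`: `l` is an interleaving of the lists in `ls`. -/
inductive Interleave {α : Type} : List (List α) → List α → Prop where
  | nil {ls : List (List α)} : (∀ l ∈ ls, l = []) → Interleave ls []
  | cons {ls : List (List α)} {i : Fin ls.length} {x : α} {xs ys : List α} :
      ls.get i = x :: xs → Interleave (ls.set i xs) ys → Interleave ls (x :: ys)

/-- The set `X_i` of a run: the initial knowledge `X₀` together with the first
`i` sent messages of `ξ`. -/
def runKnow (P : Protocol) (ξ : List (Term × Term)) (i : ℕ) : Set Term :=
  P.init ∪ {u | ∃ j : Fin ξ.length, j.1 < i ∧ u = (ξ.get j).2}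

/-- `nf(Xσ) = {nf(tσ) : t ∈ X}`. -/
def nfSubst (σ : ℕ → Term) (X : Set Term) : Set Term :=
  {u | ∃ t ∈ X, u = nf (subst σ t)}

/-- `(ξ, σ)` is a run generated by the pairwise coherent sessions `S` of `P`:
`ξ` is a prefix of an interleaving of the instantiated role sequences, `σ` is
a normalized ground substitution with domain `vars(ξ)`, and each received
message is derivable (after substitution and normalization) from the initial
knowledge together with the previously sent messages. -/
def IsRun (P : Protocol) (S : List (Role × (ℕ → Term)))
    (ξ : List (Term × Term)) (σ : ℕ → Term) : Prop :=
  (∀ s ∈ S, IsSession P s.1 s.2) ∧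
  S.Pairwise Coherent ∧
  (∃ full : List (Term × Term),
      Interleave (S.map fun s => instSeq s.1 s.2) full ∧ ξ.IsPrefix full) ∧
  (∀ x ∈ varsRS ξ, Ground (σ x) ∧ nf (σ x) = σ x) ∧
  (∀ x : ℕ, x ∉ varsRS ξ → σ x = .var x) ∧
  ∀ j : Fin ξ.length,
    Derives (nfSubst σ (runKnow P ξ j.1)) (nf (subst σ (ξ.get j).1))

/-- The set `C` associated with a run: all subterms of the initial knowledge,
the instantiated role knowledges, the messages of the run, and `secret`. -/
def Cset (P : Protocol) (S : List (Role × (ℕ → Term)))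
    (ξ : List (Term × Term)) : Set Term :=
  stSet (P.init ∪ {u | ∃ s ∈ S, ∃ t ∈ s.1.know, u = subst s.2 t} ∪
    {u | ∃ p ∈ ξ, u = p.1 ∨ u = p.2} ∪ {Term.secret})

/-- The set `D ⊆ C` of standard non-variable members of `C`. -/
def Dset (P : Protocol) (S : List (Role × (ℕ → Term)))
    (ξ : List (Term × Term)) : Set Term :=
  {t ∈ Cset P S ξ | t.IsStandard ∧ ∀ x : ℕ, t ≠ .var x}

/-- `nf(Dσ)`: a standard normalized term is *typed* iff it belongs to this set. -/
def TypedSet (P : Protocol) (S : List (Role × (ℕ → Term)))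
    (ξ : List (Term × Term)) (σ : ℕ → Term) : Set Term :=
  nfSubst σ (Dset P S ξ)

/-- `(ξ, σ)` is an attack: a run after which the intruder derives `secret`. -/
def IsAttack (P : Protocol) (S : List (Role × (ℕ → Term)))
    (ξ : List (Term × Term)) (σ : ℕ → Term) : Prop :=
  IsRun P S ξ σ ∧ Derives (nfSubst σ (runKnow P ξ ξ.length)) Term.secret

/-- `P` has a `K`-bounded attack. -/
def HasBoundedAttack (K : ℕ) (P : Protocol) : Prop :=
  ∃ (S : List (Role × (ℕ → Term))) (ξ : List (Term × Term)) (σ : ℕ → Term),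
    S.length = K ∧ IsAttack P S ξ σ


-- ===================== auxiliary development =====================

theorem foldr_pair_inj : ∀ (l l' : List ℕ),
    l.foldr (fun a b => Nat.pair a b + 1) 0 = l'.foldr (fun a b => Nat.pair a b + 1) 0 →
    l = l' := by
  intro l
  induction l with
  | nil => intro l' h; cases l' with
    | nil => rfl
    | cons a l' => simp at h
  | cons a l ih =>
    intro l' h
    cases l' with
    | nil => simp at h
    | cons b l' =>
      simp only [List.foldr] at h
      have h2 : Nat.pair a (l.foldr (fun a b => Nat.pair a b + 1) 0)
          = Nat.pair b (l'.foldr (fun a b => Nat.pair a b + 1) 0) := by omega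
      rw [Nat.pair_eq_pair] at h2
      rw [h2.1, ih l' h2.2]

theorem encode_inj_aux : ∀ n, ∀ t s : Term, sizeOf t ≤ n → encode t = encode s → t = s := by
  intro n
  induction n with
  | zero => intro t s h; cases t <;> simp at h
  | succ n ih =>
    intro t s hsz h
    cases t <;> cases s <;>
      simp only [encode, Nat.add_left_inj, Nat.pair_eq_pair, true_and, List.attach_map_val] at h <;>
      try omega
    case var.var => rw [h]
    case name.name => rw [h]
    case pk.pk =>
      exact congrArg Term.pk (ih _ _ (by simp only [Term.pk.sizeOf_spec] at hsz; omega) h)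
    case pair.pair =>
      exact congrArg₂ Term.pair
        (ih _ _ (by simp only [Term.pair.sizeOf_spec] at hsz; omega) h.1)
        (ih _ _ (by simp only [Term.pair.sizeOf_spec] at hsz; omega) h.2)
    case senc.senc =>
      exact congrArg₂ Term.senc
        (ih _ _ (by simp only [Term.senc.sizeOf_spec] at hsz; omega) h.1)
        (ih _ _ (by simp only [Term.senc.sizeOf_spec] at hsz; omega) h.2)
    case aenc.aenc =>
      exact congrArg₂ Term.aenc
        (ih _ _ (by simp only [Term.aenc.sizeOf_spec] at hsz; omega) h.1)
        (ih _ _ (by simp only [Term.aenc.sizeOf_spec] at hsz; omega) h.2)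
    case xor.xor =>
      rename_i M M'
      have hmap := foldr_pair_inj _ _ h
      congr 1
      have hszM : sizeOf M ≤ n := by
        simp only [Term.xor.sizeOf_spec] at hsz; omega
      clear h hsz
      induction M generalizing M' with
      | nil => cases M' with
        | nil => rfl
        | cons => simp at hmap
      | cons m M ihM =>
        cases M' with
        | nil => simp at hmap
        | cons m' M' =>
          simp only [List.map_cons, List.cons.injEq] at hmap
          have hm : m = m' := ih m m'
            (by simp only [List.cons.sizeOf_spec] at hszM; omega) hmap.1
          rw [hm, ihM M' hmap.2 (by simp only [List.cons.sizeOf_spec] at hszM; omega)]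

theorem encode_inj : Function.Injective encode := by
  intro t s h
  exact encode_inj_aux (sizeOf t) t s le_rfl h

abbrev rE (a b : Term) : Prop := encode a ≤ encode b

instance : IsAntisymm Term rE :=
  ⟨fun a b h1 h2 => encode_inj (le_antisymm h1 h2)⟩


theorem sortT_sorted' (l : List Term) : (sortT l).Pairwise rE := by
  have := List.pairwise_mergeSort (le := fun a b : Term => Nat.ble (encode a) (encode b))
    (fun a b c hab hbc => by
      simp only [Nat.ble_eq] at *; omega)
    (fun a b => by
      simp only [Bool.or_eq_true, Nat.ble_eq]; omega) l
  rw [sortT]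
  refine List.Pairwise.imp ?_ this
  intro a b h; simpa [Nat.ble_eq] using h

theorem sortT_perm (l : List Term) : (sortT l).Perm l := List.mergeSort_perm l _

theorem sortT_eq_of_perm {l l' : List Term} (h : l.Perm l') : sortT l = sortT l' :=
  List.Perm.eq_of_pairwise' (sortT_sorted' l) (sortT_sorted' l')
    ((sortT_perm l).trans (h.trans (sortT_perm l').symm))

theorem sortT_of_sorted {l : List Term} (h : l.Pairwise rE) : sortT l = l :=
  List.Perm.eq_of_pairwise' (sortT_sorted' l) h (sortT_perm l)

theorem cancel_subset : ∀ l : List Term, cancel l ⊆ l := by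
  intro l
  induction l using cancel.induct with
  | case1 => simp [cancel]
  | case2 a => simp [cancel]
  | case3 a b rest heq ih =>
    rw [cancel, if_pos heq]
    intro x hx
    exact List.mem_cons_of_mem _ (List.mem_cons_of_mem _ (ih hx))
  | case4 a b rest hne ih =>
    rw [cancel, if_neg hne]
    intro x hx
    rcases List.mem_cons.1 hx with h | h
    · exact h ▸ List.mem_cons_self
    · exact List.mem_cons_of_mem _ (ih h)

theorem count_cancel : ∀ l : List Term, l.Pairwise rE →
    ∀ a : Term, (cancel l).count a = l.count a % 2 := by
  intro l
  induction l using cancel.induct with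
  | case1 => simp [cancel]
  | case2 a =>
    intro _ x
    rw [cancel]
    rcases eq_or_ne a x with h | h <;> simp [List.count_cons, h]
  | case3 a b rest heq ih =>
    intro hs x
    have hab : a = b := encode_inj heq
    subst hab
    rw [cancel, if_pos heq]
    have hrest : rest.Pairwise rE := (List.pairwise_cons.1 (List.pairwise_cons.1 hs).2).2
    rw [ih hrest x]
    rcases eq_or_ne a x with h | h <;> simp [List.count_cons, h] <;> omega
  | case4 a b rest hne ih =>
    intro hs x
    have hs' : (b :: rest).Pairwise rE := (List.pairwise_cons.1 hs).2
    rw [cancel, if_neg hne]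
    rcases eq_or_ne a x with h | h
    · subst h
      have hnotmem : a ∉ b :: rest := by
        intro hmem
        have h1 : encode a ≤ encode b := (List.pairwise_cons.1 hs).1 b (List.mem_cons_self)
        rcases List.mem_cons.1 hmem with h2 | h2
        · exact hne (congrArg encode h2.symm ▸ rfl)
        · have h3 := List.rel_of_pairwise_cons hs' h2
          have : encode b ≤ encode a := h3
          exact hne (le_antisymm h1 this ▸ rfl)
      have hz : (b :: rest).count a = 0 := List.count_eq_zero.2 hnotmem
      simp [List.count_cons, ih hs' a, hz]
    · simp [List.count_cons, h, ih hs' x]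

theorem cancel_sorted : ∀ l : List Term, l.Pairwise rE → (cancel l).Pairwise rE := by
  intro l
  induction l using cancel.induct with
  | case1 => simp [cancel]
  | case2 a => intro h; rw [cancel]; exact h
  | case3 a b rest heq ih =>
    intro hs
    rw [cancel, if_pos heq]
    exact ih (List.pairwise_cons.1 (List.pairwise_cons.1 hs).2).2
  | case4 a b rest hne ih =>
    intro hs
    rw [cancel, if_neg hne]
    refine List.pairwise_cons.2 ⟨?_, ih (List.pairwise_cons.1 hs).2⟩
    intro y hy
    have hy' := cancel_subset _ hy
    rcases List.mem_cons.1 hy' with h | h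
    · exact h ▸ (List.pairwise_cons.1 hs).1 b (List.mem_cons_self)
    · exact (List.pairwise_cons.1 hs).1 y (List.mem_cons_of_mem _ h)

/-- canonical reduction of a multiset of terms -/
def Rl (m : List Term) : List Term := cancel (sortT m)

theorem Rl_count (m : List Term) (a : Term) : (Rl m).count a = m.count a % 2 := by
  rw [Rl, count_cancel _ (sortT_sorted' m), (sortT_perm m).count_eq]

theorem Rl_sorted (m : List Term) : (Rl m).Pairwise rE := cancel_sorted _ (sortT_sorted' m)

theorem Rl_nodup (m : List Term) : (Rl m).Nodup := by
  rw [List.nodup_iff_count_le_one]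
  intro a; rw [Rl_count]; omega

theorem Rl_subset (m : List Term) : Rl m ⊆ m :=
  fun x hx => (sortT_perm m).subset (cancel_subset _ hx)

theorem Rl_eq_of_parity {m m' : List Term}
    (h : ∀ a : Term, m.count a % 2 = m'.count a % 2) : Rl m = Rl m' := by
  refine List.Perm.eq_of_pairwise' (Rl_sorted m) (Rl_sorted m')
    (List.perm_iff_count.2 fun a => ?_)
  rw [Rl_count, Rl_count, h]

theorem Rl_of_sorted_nodup {l : List Term} (hs : l.Pairwise rE) (hn : l.Nodup) :
    Rl l = l := by
  refine List.Perm.eq_of_pairwise' (Rl_sorted l) hs (List.perm_iff_count.2 fun a => ?_)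
  rw [Rl_count]
  have := List.nodup_iff_count_le_one.1 hn a
  omega

theorem facL_std {t : Term} (h : t.IsStandard) : facL t = [t] := by
  cases t
  case xor => exact h.elim
  all_goals rw [facL]

theorem facL_xor (M : List Term) : facL (.xor M) = M.flatMap facL := by
  rw [facL]; simp

theorem facL_standard : ∀ (t : Term), ∀ f ∈ facL t, f.IsStandard
  | .xor M => by
    intro f hf
    rw [facL] at hf
    simp only [List.mem_flatMap, List.mem_attach, true_and] at hf
    obtain ⟨⟨m, hm⟩, hf⟩ := hf
    exact facL_standard m f hf
  | .var x => by intro f hf; rw [facL] at hf; simp at hf; simp [hf, Term.IsStandard]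
  | .name a => by intro f hf; rw [facL] at hf; simp at hf; simp [hf, Term.IsStandard]
  | .pk v => by intro f hf; rw [facL] at hf; simp at hf; simp [hf, Term.IsStandard]
  | .pair v w => by intro f hf; rw [facL] at hf; simp at hf; simp [hf, Term.IsStandard]
  | .senc v w => by intro f hf; rw [facL] at hf; simp at hf; simp [hf, Term.IsStandard]
  | .aenc v w => by intro f hf; rw [facL] at hf; simp at hf; simp [hf, Term.IsStandard]
decreasing_by
  all_goals (have := List.sizeOf_lt_of_mem hm; simp only [Term.xor.sizeOf_spec]; omega)

theorem mem_facL_isFactor : ∀ (t : Term), ∀ f ∈ facL t, IsFactor f t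
  | .xor M => by
    intro f hf
    rw [facL] at hf
    simp only [List.mem_flatMap, List.mem_attach, true_and] at hf
    obtain ⟨⟨m, hm⟩, hf⟩ := hf
    exact IsFactor.xor hm (mem_facL_isFactor m f hf)
  | .var x => by intro f hf; rw [facL] at hf; simp at hf; subst hf; exact .std (by simp [Term.IsStandard])
  | .name a => by intro f hf; rw [facL] at hf; simp at hf; subst hf; exact .std (by simp [Term.IsStandard])
  | .pk v => by intro f hf; rw [facL] at hf; simp at hf; subst hf; exact .std (by simp [Term.IsStandard])
  | .pair v w => by intro f hf; rw [facL] at hf; simp at hf; subst hf; exact .std (by simp [Term.IsStandard])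
  | .senc v w => by intro f hf; rw [facL] at hf; simp at hf; subst hf; exact .std (by simp [Term.IsStandard])
  | .aenc v w => by intro f hf; rw [facL] at hf; simp at hf; subst hf; exact .std (by simp [Term.IsStandard])
decreasing_by
  all_goals (have := List.sizeOf_lt_of_mem hm; simp only [Term.xor.sizeOf_spec]; omega)

theorem isFactor_mem_facL : ∀ {f t : Term}, IsFactor f t → f ∈ facL t := by
  intro f t h
  induction h with
  | std hstd => rw [facL_std hstd]; exact List.mem_singleton.2 rfl
  | @xor u M hu _ ih =>
    rw [facL_xor]
    exact List.mem_flatMap.2 ⟨u, hu, ih⟩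

theorem factor_subterm {f t : Term} (h : f ∈ facL t) : Subterm f t := by
  rcases t with x | a | u | ⟨u, v⟩ | ⟨u, v⟩ | ⟨u, v⟩ | M
  case xor =>
    rw [facL_xor] at h
    obtain ⟨m, hm, hf⟩ := List.mem_flatMap.1 h
    exact Subterm.xor (IsFactor.xor hm (mem_facL_isFactor m f hf)) (Subterm.refl f)
  all_goals rw [facL_std (by simp [Term.IsStandard])] at h
  all_goals rw [List.mem_singleton.1 h]
  all_goals exact Subterm.refl _

theorem subterm_trans : ∀ {a b c : Term}, Subterm a b → Subterm b c → Subterm a c := by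
  intro a b c h1 h2
  induction h2 generalizing a with
  | refl => exact h1
  | pk _ ih => exact .pk (ih h1)
  | pair_l _ ih => exact .pair_l (ih h1)
  | pair_r _ ih => exact .pair_r (ih h1)
  | senc_l _ ih => exact .senc_l (ih h1)
  | senc_r _ ih => exact .senc_r (ih h1)
  | aenc_l _ ih => exact .aenc_l (ih h1)
  | aenc_r _ ih => exact .aenc_r (ih h1)
  | xor hf _ ih => exact .xor hf (ih h1)

-- nf unfolds
theorem nf_var (x : ℕ) : nf (.var x) = .var x := by rw [nf]
theorem nf_name (a : ℕ) : nf (.name a) = .name a := by rw [nf]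
theorem nf_pk (u : Term) : nf (.pk u) = .pk (nf u) := by rw [nf]
theorem nf_pair (u v : Term) : nf (.pair u v) = .pair (nf u) (nf v) := by rw [nf]
theorem nf_senc (u v : Term) : nf (.senc u v) = .senc (nf u) (nf v) := by rw [nf]
theorem nf_aenc (u v : Term) : nf (.aenc u v) = .aenc (nf u) (nf v) := by rw [nf]
theorem nf_xor (M : List Term) :
    nf (.xor M) = xorOf (Rl ((M.flatMap facL).map nf)) := by
  rw [nf, Rl]
  congr 2
  rw [List.attach_map_val, facL_xor]

theorem nf_zero : nf Term.zero = Term.zero := nf_name 0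

theorem xorOf_cons_cons (a b : Term) (l : List Term) :
    xorOf (a :: b :: l) = .xor (a :: b :: l) := rfl

theorem nf_standard {t : Term} (h : t.IsStandard) : (nf t).IsStandard := by
  cases t <;> simp [Term.IsStandard, nf_var, nf_name, nf_pk, nf_pair, nf_senc, nf_aenc] at h ⊢

theorem flat_of_standard {l : List Term} (h : ∀ s ∈ l, s.IsStandard) :
    l.flatMap facL = l := by
  induction l with
  | nil => rfl
  | cons a l ih =>
    rw [List.flatMap_cons, facL_std (h a (List.mem_cons_self)),
      ih (fun s hs => h s (List.mem_cons_of_mem _ hs))]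
    rfl

theorem nf_idem_aux : ∀ n, ∀ t : Term, sizeOf t ≤ n → nf (nf t) = nf t := by
  intro n
  induction n with
  | zero => intro t h; cases t <;> simp at h
  | succ n ih =>
    intro t hsz
    rcases t with x | a | u | ⟨u, v⟩ | ⟨u, v⟩ | ⟨u, v⟩ | M
    · rw [nf_var, nf_var]
    · rw [nf_name, nf_name]
    · rw [nf_pk, nf_pk, ih u (by simp only [Term.pk.sizeOf_spec] at hsz; omega)]
    · rw [nf_pair, nf_pair, ih u (by simp only [Term.pair.sizeOf_spec] at hsz; omega),
        ih v (by simp only [Term.pair.sizeOf_spec] at hsz; omega)]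
    · rw [nf_senc, nf_senc, ih u (by simp only [Term.senc.sizeOf_spec] at hsz; omega),
        ih v (by simp only [Term.senc.sizeOf_spec] at hsz; omega)]
    · rw [nf_aenc, nf_aenc, ih u (by simp only [Term.aenc.sizeOf_spec] at hsz; omega),
        ih v (by simp only [Term.aenc.sizeOf_spec] at hsz; omega)]
    · rw [nf_xor]
      have hmem : ∀ e ∈ Rl ((M.flatMap facL).map nf), e.IsStandard ∧ nf e = e := by
        intro e he
        have he' := Rl_subset _ he
        obtain ⟨s, hs, rfl⟩ := List.mem_map.1 he'
        rw [← facL_xor] at hs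
        refine ⟨nf_standard (facL_standard _ s hs), ?_⟩
        have hslt := sizeOf_lt_of_mem_facL_xor M s hs
        exact ih s (by omega)
      rcases hS : Rl ((M.flatMap facL).map nf) with - | ⟨v, - | ⟨w, rest⟩⟩
      · rw [xorOf]; exact nf_zero
      · rw [xorOf]
        exact (hmem v (by rw [hS]; exact List.mem_singleton.2 rfl)).2
      · rw [xorOf_cons_cons, nf_xor]
        have hstd : ∀ e ∈ v :: w :: rest, e.IsStandard := by
          intro e he; exact (hmem e (by rw [hS]; exact he)).1
        have hnrm : ∀ e ∈ v :: w :: rest, nf e = e := by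
          intro e he; exact (hmem e (by rw [hS]; exact he)).2
        rw [flat_of_standard hstd, List.map_congr_left hnrm, List.map_id',
          Rl_of_sorted_nodup (hS ▸ Rl_sorted _) (hS ▸ Rl_nodup _), xorOf_cons_cons]

theorem nf_idem (t : Term) : nf (nf t) = nf t := nf_idem_aux (sizeOf t) t le_rfl

theorem Rl_mapnf_elem {M : List Term} :
    ∀ e ∈ Rl ((M.flatMap facL).map nf), e.IsStandard ∧ nf e = e := by
  intro e he
  have he' := Rl_subset _ he
  obtain ⟨s, hs, rfl⟩ := List.mem_map.1 he'
  rw [← facL_xor] at hs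
  exact ⟨nf_standard (facL_standard _ s hs), nf_idem s⟩

theorem factors_normalized : ∀ {t : Term}, nf t = t → ∀ f ∈ facL t, nf f = f := by
  intro t h f hf
  rcases t with x | a | u | ⟨u, v⟩ | ⟨u, v⟩ | ⟨u, v⟩ | M
  case xor =>
    rw [nf_xor] at h
    rcases hS : Rl ((M.flatMap facL).map nf) with - | ⟨v, - | ⟨w, rest⟩⟩ <;> rw [hS] at h
    · rw [xorOf] at h; simp [Term.zero] at h
    · rw [xorOf] at h
      have := (Rl_mapnf_elem v (hS ▸ List.mem_singleton.2 rfl)).1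
      rw [h] at this
      exact this.elim
    · rw [xorOf_cons_cons, Term.xor.injEq] at h
      have hstd : ∀ e ∈ v :: w :: rest, e.IsStandard ∧ nf e = e := by
        intro e he; exact Rl_mapnf_elem e (hS ▸ he)
      rw [facL_xor, ← h, flat_of_standard (fun s hs => (hstd s hs).1)] at hf
      exact (hstd f hf).2
  all_goals (
    rw [facL_std (by simp [Term.IsStandard])] at hf
    rw [List.mem_singleton.1 hf]
    exact h)

theorem subterm_normalized : ∀ {u t : Term}, Subterm u t → nf t = t → nf u = u := by
  intro u t h
  induction h with
  | refl => exact fun hn => hn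
  | pk _ ih => intro hn; rw [nf_pk, Term.pk.injEq] at hn; exact ih hn
  | pair_l _ ih => intro hn; rw [nf_pair, Term.pair.injEq] at hn; exact ih hn.1
  | pair_r _ ih => intro hn; rw [nf_pair, Term.pair.injEq] at hn; exact ih hn.2
  | senc_l _ ih => intro hn; rw [nf_senc, Term.senc.injEq] at hn; exact ih hn.1
  | senc_r _ ih => intro hn; rw [nf_senc, Term.senc.injEq] at hn; exact ih hn.2
  | aenc_l _ ih => intro hn; rw [nf_aenc, Term.aenc.injEq] at hn; exact ih hn.1
  | aenc_r _ ih => intro hn; rw [nf_aenc, Term.aenc.injEq] at hn; exact ih hn.2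
  | xor hf _ ih =>
    intro hn
    exact ih (factors_normalized hn _ (isFactor_mem_facL hf))

/-- the list of subterms of a term -/
def stList : Term → List Term
  | .var x => [.var x]
  | .name a => [.name a]
  | .pk u => .pk u :: stList u
  | .pair u v => .pair u v :: (stList u ++ stList v)
  | .senc u v => .senc u v :: (stList u ++ stList v)
  | .aenc u v => .aenc u v :: (stList u ++ stList v)
  | .xor M => .xor M :: (facL (.xor M)).attach.flatMap fun f => stList f.1
decreasing_by
  all_goals first
  | (exact sizeOf_lt_of_mem_facL_xor M f.1 f.2)
  | (simp only [Term.pk.sizeOf_spec, Term.pair.sizeOf_spec, Term.senc.sizeOf_spec,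
      Term.aenc.sizeOf_spec]; omega)

theorem self_mem_stList (t : Term) : t ∈ stList t := by
  cases t <;> (rw [stList]; exact List.mem_cons_self)

theorem subterm_mem_stList : ∀ {u t : Term}, Subterm u t → u ∈ stList t := by
  intro u t h
  induction h with
  | refl => exact self_mem_stList _
  | pk _ ih => rw [stList]; exact List.mem_cons_of_mem _ ih
  | pair_l _ ih => rw [stList]; exact List.mem_cons_of_mem _ (List.mem_append_left _ ih)
  | pair_r _ ih => rw [stList]; exact List.mem_cons_of_mem _ (List.mem_append_right _ ih)
  | senc_l _ ih => rw [stList]; exact List.mem_cons_of_mem _ (List.mem_append_left _ ih)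
  | senc_r _ ih => rw [stList]; exact List.mem_cons_of_mem _ (List.mem_append_right _ ih)
  | aenc_l _ ih => rw [stList]; exact List.mem_cons_of_mem _ (List.mem_append_left _ ih)
  | aenc_r _ ih => rw [stList]; exact List.mem_cons_of_mem _ (List.mem_append_right _ ih)
  | @xor w M hf _ ih =>
    rw [stList]
    refine List.mem_cons_of_mem _ (List.mem_flatMap.2 ?_)
    exact ⟨⟨w, isFactor_mem_facL hf⟩, List.mem_attach _ _, ih⟩

theorem stT_finite (t : Term) : (stT t).Finite :=
  Set.Finite.subset (stList t).finite_toSet (fun _ hu => subterm_mem_stList hu)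

theorem stSet_finite {S : Set Term} (h : S.Finite) : (stSet S).Finite := by
  refine Set.Finite.subset (Set.Finite.biUnion h (fun t _ => stT_finite t)) ?_
  rintro u ⟨s, hs, hsub⟩
  exact Set.mem_biUnion hs hsub

theorem mem_stSet_of_subterm {S : Set Term} {u w : Term}
    (hu : u ∈ stSet S) (hw : Subterm w u) : w ∈ stSet S := by
  obtain ⟨s, hs, hsub⟩ := hu
  exact ⟨s, hs, subterm_trans hw hsub⟩

theorem mem_stSet_self {S : Set Term} {u : Term} (h : u ∈ S) : u ∈ stSet S :=
  ⟨u, h, Subterm.refl u⟩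

-- fixpoint machinery
theorem subset_oneStep (st Y : Set Term) : Y ⊆ oneStep st Y := fun _ h => Or.inl h

theorem iterate_subset_st {st X : Set Term} (hX : X ⊆ st) (i : ℕ) :
    (oneStep st)^[i] X ⊆ st ∪ X := by
  induction i with
  | zero => simp
  | succ i ih =>
    rw [Function.iterate_succ_apply']
    rintro u (h | h)
    · exact ih h
    · exact Or.inl h.1

theorem iterate_succ_subset {st X : Set Term} (i : ℕ) :
    (oneStep st)^[i] X ⊆ (oneStep st)^[i + 1] X := by
  rw [Function.iterate_succ_apply']
  exact subset_oneStep _ _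

theorem iterate_le_subset {st X : Set Term} {i j : ℕ} (h : i ≤ j) :
    (oneStep st)^[i] X ⊆ (oneStep st)^[j] X := by
  induction j with
  | zero => rw [Nat.le_zero.1 h]
  | succ j ih =>
    rcases Nat.lt_or_ge i (j+1) with hlt | hge
    · exact (ih (by omega)).trans (iterate_succ_subset j)
    · rw [le_antisymm h hge]

theorem iterate_stab {st X : Set Term} {i : ℕ}
    (h : (oneStep st)^[i + 1] X = (oneStep st)^[i] X) :
    ∀ j, i ≤ j → (oneStep st)^[j] X = (oneStep st)^[i] X := by
  intro j hij
  induction j with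
  | zero => rw [Nat.le_zero.1 hij]
  | succ j ih =>
    rcases Nat.lt_or_ge i (j+1) with hlt | hge
    · have hj := ih (by omega)
      rw [Function.iterate_succ_apply', hj]
      have h' := h
      rw [Function.iterate_succ_apply'] at h'
      exact h'
    · rw [le_antisymm hij hge]

theorem exists_fixpoint {st X : Set Term} (hX : X ⊆ st) (hfin : st.Finite) :
    ∃ i ≤ st.ncard, (oneStep st)^[i + 1] X = (oneStep st)^[i] X := by
  by_contra hcon
  push_neg at hcon
  have hgrow : ∀ i ≤ st.ncard + 1, i ≤ ((oneStep st)^[i] X).ncard := by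
    intro i
    induction i with
    | zero => omega
    | succ i ih =>
      intro hi
      have h1 := ih (by omega)
      have hne := hcon i (by omega)
      have hsub := iterate_succ_subset (st := st) (X := X) i
      have hfin' : ((oneStep st)^[i+1] X).Finite :=
        (hfin.union (hfin.subset hX)).subset (by
          have := iterate_subset_st hX (i+1)
          intro u hu; exact this hu)
      have hss : (oneStep st)^[i] X ⊂ (oneStep st)^[i+1] X :=
        ssubset_of_subset_of_ne hsub (fun hh => hne hh.symm)
      have := Set.ncard_lt_ncard hss hfin'
      omega
  have h2 := hgrow (st.ncard + 1) le_rfl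
  have h3 : ((oneStep st)^[st.ncard + 1] X).ncard ≤ st.ncard := by
    refine Set.ncard_le_ncard ?_ hfin
    intro u hu
    rcases iterate_subset_st hX (st.ncard + 1) hu with h | h
    · exact h
    · exact hX h
  omega

theorem iterate_eq_of_ge {st X : Set Term} (hX : X ⊆ st) (hfin : st.Finite) :
    ∀ i, st.ncard ≤ i → (oneStep st)^[i] X = (oneStep st)^[st.ncard] X := by
  obtain ⟨j, hj, hfix⟩ := exists_fixpoint hX hfin
  intro i hi
  rw [iterate_stab hfix i (by omega), iterate_stab hfix st.ncard hj]

-- soundness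
theorem derives_list {X : Set Term} (l : List Term) (h : ∀ s ∈ l, Derives X s) :
    ∃ ds : List PTree, (∀ d ∈ ds, IsProof X d) ∧ ds.map PTree.conc = l := by
  induction l with
  | nil => exact ⟨[], by simp, rfl⟩
  | cons a l ih =>
    obtain ⟨ds, hds, hmap⟩ := ih (fun s hs => h s (List.mem_cons_of_mem _ hs))
    obtain ⟨d, hd, hc⟩ := h a (List.mem_cons_self)
    refine ⟨d :: ds, ?_, by rw [List.map_cons, hmap, hc]⟩
    intro e he
    rcases List.mem_cons.1 he with rfl | he
    · exact hd
    · exact hds e he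

theorem derives_of_ruleStep {X Y : Set Term} {u : Term}
    (hY : ∀ v ∈ Y, Derives X v) (h : RuleStep Y u) : Derives X u := by
  induction h with
  | @split1 t v h =>
    obtain ⟨d, hd, hc⟩ := hY _ h
    exact ⟨.node t .split1 [d], .split1 hd hc, rfl⟩
  | @split2 t v h =>
    obtain ⟨d, hd, hc⟩ := hY _ h
    exact ⟨.node v .split2 [d], .split2 hd hc, rfl⟩
  | @sdec t v h1 h2 =>
    obtain ⟨d1, hd1, hc1⟩ := hY _ h1
    obtain ⟨d2, hd2, hc2⟩ := hY _ h2
    exact ⟨.node t .sdec [d1, d2], .sdec hd1 hd2 hc1 hc2, rfl⟩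
  | @adec t k h1 h2 =>
    obtain ⟨d1, hd1, hc1⟩ := hY _ h1
    obtain ⟨d2, hd2, hc2⟩ := hY _ h2
    exact ⟨.node t .adec [d1, d2], .adec hd1 hd2 hc1 hc2, rfl⟩
  | @pkR k h =>
    obtain ⟨d, hd, hc⟩ := hY _ h
    exact ⟨.node (.pk (.name k)) .pkR [d], .pkR hd hc, rfl⟩
  | @pairR a b h1 h2 =>
    obtain ⟨d1, hd1, hc1⟩ := hY _ h1
    obtain ⟨d2, hd2, hc2⟩ := hY _ h2
    exact ⟨.node (.pair d1.conc d2.conc) .pairR [d1, d2], .pairR hd1 hd2, by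
      rw [PTree.conc, hc1, hc2]⟩
  | @sencR a b h1 h2 =>
    obtain ⟨d1, hd1, hc1⟩ := hY _ h1
    obtain ⟨d2, hd2, hc2⟩ := hY _ h2
    exact ⟨.node (.senc d1.conc d2.conc) .sencR [d1, d2], .sencR hd1 hd2, by
      rw [PTree.conc, hc1, hc2]⟩
  | @aencR a k h1 h2 =>
    obtain ⟨d1, hd1, hc1⟩ := hY _ h1
    obtain ⟨d2, hd2, hc2⟩ := hY _ h2
    refine ⟨.node (.aenc d1.conc (.pk (.name k))) .aencR [d1, d2], .aencR hd1 hd2 hc2, by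
      rw [PTree.conc, hc1]⟩
  | @xorR l h =>
    obtain ⟨ds, hds, hmap⟩ := derives_list l (fun s hs => hY s (h s hs))
    exact ⟨.node (nf (.xor (ds.map PTree.conc))) .xorR ds, .xorR hds, by rw [hmap]; rfl⟩

theorem derives_of_mem_iterate {st X : Set Term} (hXnorm : ∀ u ∈ X, nf u = u) :
    ∀ i, ∀ u ∈ (oneStep st)^[i] X, Derives X u := by
  intro i
  induction i with
  | zero => exact fun u hu => ⟨.node u .ax [], .ax hu (hXnorm u hu), rfl⟩
  | succ i ih =>
    rw [Function.iterate_succ_apply']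
    rintro u (hu | ⟨-, hu⟩)
    · exact ih u hu
    · exact derives_of_ruleStep ih hu

/-- the multiset (list) of normalized factors of a term -/
def mnf (u : Term) : List Term := (facL u).map nf

/-- normalized factors of a list of terms -/
def flatn (l : List Term) : List Term := (l.flatMap facL).map nf

theorem flatn_nil : flatn [] = [] := rfl

theorem flatn_cons (s : Term) (l : List Term) : flatn (s :: l) = mnf s ++ flatn l := by
  rw [flatn, List.flatMap_cons, List.map_append]; rfl

theorem flatn_append (l l' : List Term) : flatn (l ++ l') = flatn l ++ flatn l' := by
  rw [flatn, List.flatMap_append, List.map_append]; rfl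

theorem mnf_std {u : Term} (h : u.IsStandard) : mnf u = [nf u] := by
  rw [mnf, facL_std h]; rfl

theorem mnf_xor (L : List Term) : mnf (.xor L) = flatn L := by
  rw [mnf, facL_xor]; rfl

theorem nf_xor' (L : List Term) : nf (.xor L) = xorOf (Rl (flatn L)) := nf_xor L

theorem Rl_nil : Rl [] = [] := by
  rw [Rl, sortT, List.mergeSort_nil, cancel]

theorem nf_xor_nil : nf (.xor []) = Term.zero := by
  rw [nf_xor', flatn_nil, Rl_nil, xorOf]

theorem Rl_flatn_elem {L : List Term} :
    ∀ e ∈ Rl (flatn L), e.IsStandard ∧ nf e = e := Rl_mapnf_elem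

theorem nf_xor_of_Rl_nil {L : List Term} (h : Rl (flatn L) = []) :
    nf (.xor L) = Term.zero := by
  rw [nf_xor', h, xorOf]

theorem mnf_nf_xor {L : List Term} (h : Rl (flatn L) ≠ []) :
    mnf (nf (.xor L)) = Rl (flatn L) := by
  rw [nf_xor']
  rcases hS : Rl (flatn L) with - | ⟨v, - | ⟨w, rest⟩⟩
  · exact absurd hS h
  · rw [xorOf, mnf_std (Rl_flatn_elem v (hS ▸ List.mem_singleton.2 rfl)).1,
      (Rl_flatn_elem v (hS ▸ List.mem_singleton.2 rfl)).2]
  · have hstd : ∀ e ∈ v :: w :: rest, e.IsStandard ∧ nf e = e := by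
      intro e he; exact Rl_flatn_elem e (hS ▸ he)
    rw [xorOf_cons_cons, mnf_xor, flatn, flat_of_standard (fun s hs => (hstd s hs).1),
      List.map_congr_left (fun s hs => (hstd s hs).2), List.map_id']

theorem count_mnf_nf (u : Term) (hnz : nf u ≠ Term.zero) :
    ∀ a : Term, (mnf (nf u)).count a % 2 = (mnf u).count a % 2 := by
  intro a
  rcases u with x | b | v | ⟨v, w⟩ | ⟨v, w⟩ | ⟨v, w⟩ | L
  case xor =>
    have hne : Rl (flatn L) ≠ [] := fun hh => hnz (nf_xor_of_Rl_nil hh)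
    rw [mnf_nf_xor hne, mnf_xor, Rl_count]
    have := List.nodup_iff_count_le_one.1 (Rl_nodup (flatn L)) a
    omega
  all_goals (
    rw [mnf_std (nf_standard (by simp [Term.IsStandard])),
      mnf_std (by simp [Term.IsStandard]), nf_idem])

/-- for normalized `w`, `⊕(fac w)` normalizes to `w` itself -/
theorem xorOf_Rl_mnf {w : Term} (h : nf w = w) : xorOf (Rl (mnf w)) = w := by
  by_cases hs : w.IsStandard
  · rw [mnf_std hs, h, Rl, sortT_of_sorted (List.pairwise_singleton _ w), cancel, xorOf]
  · obtain ⟨L, rfl⟩ : ∃ L, w = .xor L := by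
      cases w <;> first | exact ⟨_, rfl⟩ | exact absurd (by simp [Term.IsStandard]) hs
    have hx : nf (.xor L) = .xor L := h
    rw [nf_xor'] at hx
    rcases hS : Rl (flatn L) with - | ⟨v, - | ⟨u', rest⟩⟩ <;> rw [hS] at hx
    · rw [xorOf] at hx
      simp [Term.zero] at hx
    · rw [xorOf] at hx
      have := (Rl_flatn_elem v (hS ▸ List.mem_singleton.2 rfl)).1
      rw [hx] at this
      exact this.elim
    · rw [xorOf_cons_cons, Term.xor.injEq] at hx
      have hstd' : ∀ e ∈ v :: u' :: rest, e.IsStandard ∧ nf e = e := by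
        intro e he; exact Rl_flatn_elem e (hS ▸ he)
      have hmnf : mnf (Term.xor L) = v :: u' :: rest := by
        rw [mnf_xor, ← hx, flatn, flat_of_standard (fun s hs => (hstd' s hs).1),
          List.map_congr_left (fun s hs => (hstd' s hs).2), List.map_id']
      rw [hmnf, Rl_of_sorted_nodup (hS ▸ Rl_sorted _) (hS ▸ Rl_nodup _), xorOf_cons_cons, hx]

/-- list of "freshly constructed" standard terms, from records of their components -/
def hOf (hk : List ℕ) (hp hs : List (Term × Term)) (ha : List (Term × ℕ)) (nz : ℕ) :
    List Term :=
  List.replicate nz Term.zero ++ hk.map (fun k => Term.pk (.name k)) ++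
    hp.map (fun p => Term.pair (nf p.1) (nf p.2)) ++
    hs.map (fun p => Term.senc (nf p.1) (nf p.2)) ++
    ha.map (fun p => Term.aenc (nf p.1) (.pk (.name p.2)))

/-- `TD Z u` : the normalized factors of `u` are, modulo cancellation, obtained from
members of `Z` together with constructed standard terms whose components satisfy `TD`. -/
inductive TD (Z : Set Term) : Term → Prop where
  | mk (u : Term) (g : List Term) (hk : List ℕ) (hp hs : List (Term × Term))
      (ha : List (Term × ℕ)) (nz : ℕ)
      (hg : ∀ e ∈ g, e ∈ Z)
      (hhk : ∀ k ∈ hk, TD Z (.name k))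
      (hhp1 : ∀ p ∈ hp, TD Z p.1) (hhp2 : ∀ p ∈ hp, TD Z p.2)
      (hhs1 : ∀ p ∈ hs, TD Z p.1) (hhs2 : ∀ p ∈ hs, TD Z p.2)
      (hha1 : ∀ p ∈ ha, TD Z p.1) (hha2 : ∀ p ∈ ha, TD Z (.pk (.name p.2)))
      (hpar : ∀ a : Term,
        (mnf u).count a % 2 = (flatn g ++ hOf hk hp hs ha nz).count a % 2) :
      TD Z u

/-- same data, relative to an arbitrary multiset -/
def TDD (Z : Set Term) (m : List Term) : Prop :=
  ∃ g hk hp hs ha nz, (∀ e ∈ g, e ∈ Z) ∧ (∀ k ∈ hk, TD Z (.name k)) ∧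
    (∀ p ∈ hp, TD Z p.1) ∧ (∀ p ∈ hp, TD Z p.2) ∧
    (∀ p ∈ hs, TD Z p.1) ∧ (∀ p ∈ hs, TD Z p.2) ∧
    (∀ p ∈ ha, TD Z p.1) ∧ (∀ p ∈ ha, TD Z (.pk (.name p.2))) ∧
    ∀ a : Term, m.count a % 2 = (flatn g ++ hOf hk hp hs ha nz).count a % 2

theorem TDD_of_TD {Z : Set Term} {u : Term} (h : TD Z u) : TDD Z (mnf u) := by
  rcases h with ⟨_, g, hk, hp, hs, ha, nz, hg, h1, h2, h3, h4, h5, h6, h7, hpar⟩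
  exact ⟨g, hk, hp, hs, ha, nz, hg, h1, h2, h3, h4, h5, h6, h7, hpar⟩

theorem TD_of_TDD {Z : Set Term} {u : Term} (h : TDD Z (mnf u)) : TD Z u := by
  obtain ⟨g, hk, hp, hs, ha, nz, hg, h1, h2, h3, h4, h5, h6, h7, hpar⟩ := h
  exact ⟨u, g, hk, hp, hs, ha, nz, hg, h1, h2, h3, h4, h5, h6, h7, hpar⟩

theorem TDD_parity {Z : Set Term} {m m' : List Term} (h : TDD Z m)
    (hp : ∀ a : Term, m.count a % 2 = m'.count a % 2) : TDD Z m' := by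
  obtain ⟨g, hk, hp', hs, ha, nz, hg, h1, h2, h3, h4, h5, h6, h7, hpar⟩ := h
  exact ⟨g, hk, hp', hs, ha, nz, hg, h1, h2, h3, h4, h5, h6, h7,
    fun a => by rw [← hp a, hpar a]⟩

theorem count_hOf_append (hk hk' : List ℕ) (hp hp' hs hs' : List (Term × Term))
    (ha ha' : List (Term × ℕ)) (nz nz' : ℕ) (a : Term) :
    (hOf (hk ++ hk') (hp ++ hp') (hs ++ hs') (ha ++ ha') (nz + nz')).count a =
      (hOf hk hp hs ha nz).count a + (hOf hk' hp' hs' ha' nz').count a := by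
  simp only [hOf, List.count_append, List.map_append, List.replicate_add]
  omega

theorem TDD_append {Z : Set Term} {m m' : List Term} (h : TDD Z m) (h' : TDD Z m') :
    TDD Z (m ++ m') := by
  obtain ⟨g, hk, hp, hs, ha, nz, hg, h1, h2, h3, h4, h5, h6, h7, hpar⟩ := h
  obtain ⟨g', hk', hp', hs', ha', nz', hg', h1', h2', h3', h4', h5', h6', h7', hpar'⟩ := h'
  refine ⟨g ++ g', hk ++ hk', hp ++ hp', hs ++ hs', ha ++ ha', nz + nz', ?_, ?_, ?_, ?_, ?_,
    ?_, ?_, ?_, ?_⟩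
  · intro e he; rcases List.mem_append.1 he with h | h; exacts [hg e h, hg' e h]
  · intro k hkk; rcases List.mem_append.1 hkk with h | h; exacts [h1 k h, h1' k h]
  · intro p hpp; rcases List.mem_append.1 hpp with h | h; exacts [h2 p h, h2' p h]
  · intro p hpp; rcases List.mem_append.1 hpp with h | h; exacts [h3 p h, h3' p h]
  · intro p hpp; rcases List.mem_append.1 hpp with h | h; exacts [h4 p h, h4' p h]
  · intro p hpp; rcases List.mem_append.1 hpp with h | h; exacts [h5 p h, h5' p h]
  · intro p hpp; rcases List.mem_append.1 hpp with h | h; exacts [h6 p h, h6' p h]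
  · intro p hpp; rcases List.mem_append.1 hpp with h | h; exacts [h7 p h, h7' p h]
  · intro a
    rw [List.count_append, flatn_append, List.count_append, List.count_append,
      count_hOf_append]
    have e1 := hpar a
    have e2 := hpar' a
    rw [List.count_append] at e1 e2
    omega

theorem TDD_nil (Z : Set Term) : TDD Z [] :=
  ⟨[], [], [], [], [], 0, by simp, by simp, by simp, by simp, by simp, by simp, by simp,
    by simp, fun a => by simp [flatn_nil, hOf]⟩

theorem TD_zmem {Z : Set Term} {u : Term} (h : u ∈ Z) : TD Z u :=
  ⟨u, [u], [], [], [], [], 0, by simpa using h, by simp, by simp, by simp, by simp, by simp,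
    by simp, by simp, fun a => by
      rw [flatn_cons, flatn_nil, List.append_nil]
      simp [hOf]⟩

theorem TD_zero (Z : Set Term) : TD Z Term.zero :=
  ⟨Term.zero, [], [], [], [], [], 1, by simp, by simp, by simp, by simp, by simp, by simp,
    by simp, by simp, fun a => by
      rw [mnf_std (by simp [Term.zero, Term.IsStandard]), nf_zero]
      simp [flatn_nil, hOf]⟩

theorem TD_pk {Z : Set Term} {k : ℕ} (h : TD Z (.name k)) : TD Z (.pk (.name k)) :=
  ⟨_, [], [k], [], [], [], 0, by simp, by simpa using h, by simp, by simp, by simp, by simp,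
    by simp, by simp, fun a => by
      rw [mnf_std (by simp [Term.IsStandard]), nf_pk, nf_name]
      simp [flatn_nil, hOf]⟩

theorem TD_pair {Z : Set Term} {u v : Term} (hu : TD Z u) (hv : TD Z v) :
    TD Z (.pair u v) :=
  ⟨_, [], [], [(u, v)], [], [], 0, by simp, by simp, by simpa using hu, by simpa using hv,
    by simp, by simp, by simp, by simp, fun a => by
      rw [mnf_std (by simp [Term.IsStandard]), nf_pair]
      simp [flatn_nil, hOf]⟩

theorem TD_senc {Z : Set Term} {u v : Term} (hu : TD Z u) (hv : TD Z v) :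
    TD Z (.senc u v) :=
  ⟨_, [], [], [], [(u, v)], [], 0, by simp, by simp, by simp, by simp, by simpa using hu,
    by simpa using hv, by simp, by simp, fun a => by
      rw [mnf_std (by simp [Term.IsStandard]), nf_senc]
      simp [flatn_nil, hOf]⟩

theorem TD_aenc {Z : Set Term} {u : Term} {k : ℕ} (hu : TD Z u)
    (hk : TD Z (.pk (.name k))) : TD Z (.aenc u (.pk (.name k))) :=
  ⟨_, [], [], [], [], [(u, k)], 0, by simp, by simp, by simp, by simp, by simp, by simp,
    by simpa using hu, by simpa using hk, fun a => by
      rw [mnf_std (by simp [Term.IsStandard]), nf_aenc, nf_pk, nf_name]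
      simp [flatn_nil, hOf]⟩

theorem TD_nf {Z : Set Term} {u : Term} (h : TD Z u) : TD Z (nf u) := by
  by_cases hz : nf u = Term.zero
  · rw [hz]; exact TD_zero Z
  · exact TD_of_TDD (TDD_parity (TDD_of_TD h) (fun a => (count_mnf_nf u hz a).symm))

theorem TDD_flatn {Z : Set Term} {L : List Term} (h : ∀ s ∈ L, TD Z s) :
    TDD Z (flatn L) := by
  induction L with
  | nil => rw [flatn_nil]; exact TDD_nil Z
  | cons s L ih =>
    rw [flatn_cons]
    exact TDD_append (TDD_of_TD (h s (List.mem_cons_self)))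
      (ih (fun e he => h e (List.mem_cons_of_mem _ he)))

theorem TD_xor {Z : Set Term} {L : List Term} (h : ∀ s ∈ L, TD Z s) :
    TD Z (nf (.xor L)) := by
  by_cases hS : Rl (flatn L) = []
  · rw [nf_xor_of_Rl_nil hS]; exact TD_zero Z
  · refine TD_of_TDD (TDD_parity (TDD_flatn h) (fun a => ?_))
    rw [mnf_nf_xor hS, Rl_count]
    have := List.nodup_iff_count_le_one.1 (Rl_nodup (flatn L)) a
    omega

theorem IsProof_conc_nf {X : Set Term} {π : PTree} (h : IsProof X π) :
    nf π.conc = π.conc := by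
  induction h with
  | ax hmem hnf => exact hnf
  | split1 hδ hc ih =>
    rw [hc, nf_pair, Term.pair.injEq] at ih
    exact ih.1
  | split2 hδ hc ih =>
    rw [hc, nf_pair, Term.pair.injEq] at ih
    exact ih.2
  | sdec hδ1 hδ2 hc1 hc2 ih1 ih2 =>
    rw [hc1, nf_senc, Term.senc.injEq] at ih1
    exact ih1.1
  | adec hδ1 hδ2 hc1 hc2 ih1 ih2 =>
    rw [hc1, nf_aenc, Term.aenc.injEq] at ih1
    exact ih1.1
  | pkR hδ hc ih => rw [PTree.conc, nf_pk, nf_name]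
  | pairR hδ1 hδ2 ih1 ih2 => rw [PTree.conc, nf_pair, ih1, ih2]
  | sencR hδ1 hδ2 ih1 ih2 => rw [PTree.conc, nf_senc, ih1, ih2]
  | aencR hδ1 hδ2 hc2 ih1 ih2 => rw [PTree.conc, nf_aenc, ih1, nf_pk, nf_name]
  | xorR hl ih => rw [PTree.conc, nf_idem]

section Absorb

variable {Z st : Set Term}

theorem zero_in_Z (hcl : ∀ u ∈ st, RuleStep Z u → u ∈ Z) (h : Term.zero ∈ st) :
    Term.zero ∈ Z := by
  have hr := RuleStep.xorR (Y := Z) (l := []) (by simp)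
  rw [nf_xor_nil] at hr
  exact hcl _ h hr

theorem flatn_g_elem (hstc : ∀ u ∈ st, ∀ w, Subterm w u → w ∈ st)
    (hZst : Z ⊆ st) (hZnorm : ∀ z ∈ Z, nf z = z) {g : List Term}
    (hg : ∀ e ∈ g, e ∈ Z) : ∀ f ∈ flatn g, f ∈ st ∧ nf f = f := by
  intro f hf
  rw [flatn] at hf
  obtain ⟨s, hs, rfl⟩ := List.mem_map.1 hf
  obtain ⟨z, hz, hsz⟩ := List.mem_flatMap.1 hs
  have hzn := hZnorm z (hg z hz)
  have hsn := factors_normalized hzn s hsz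
  rw [hsn]
  exact ⟨hstc z (hZst (hg z hz)) s (factor_subterm hsz), hsn ▸ hsn⟩

theorem hOf_std (hk : List ℕ) (hp hs : List (Term × Term)) (ha : List (Term × ℕ)) (nz : ℕ) :
    ∀ f ∈ hOf hk hp hs ha nz, f.IsStandard ∧ nf f = f := by
  intro f hf
  simp only [hOf, List.mem_append, List.mem_map, List.mem_replicate] at hf
  rcases hf with ((((⟨-, rfl⟩ | ⟨k, -, rfl⟩) | ⟨p, -, rfl⟩) | ⟨p, -, rfl⟩) | ⟨p, -, rfl⟩)
  · exact ⟨by simp [Term.zero, Term.IsStandard], nf_zero⟩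
  · exact ⟨by simp [Term.IsStandard], by rw [nf_pk, nf_name]⟩
  · exact ⟨by simp [Term.IsStandard], by rw [nf_pair, nf_idem, nf_idem]⟩
  · exact ⟨by simp [Term.IsStandard], by rw [nf_senc, nf_idem, nf_idem]⟩
  · exact ⟨by simp [Term.IsStandard], by rw [nf_aenc, nf_idem, nf_pk, nf_name]⟩


theorem count_filter_pos {p : Term → Bool} {a : Term} (h : p a = true) :
    ∀ l : List Term, (l.filter p).count a = l.count a := by
  intro l
  induction l with
  | nil => rfl
  | cons b l ih =>
    by_cases hb : p b = true
    · rw [List.filter_cons_of_pos hb, List.count_cons, List.count_cons, ih]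
    · rw [List.filter_cons_of_neg hb, ih, List.count_cons]
      have hba : (b == a) = false := by
        refine beq_eq_false_iff_ne.2 (fun e => hb ?_)
        rw [e]; exact h
      rw [hba]
      simp

theorem TD_absorb (hstc : ∀ u ∈ st, ∀ w, Subterm w u → w ∈ st)
    (hZst : Z ⊆ st) (hZnorm : ∀ z ∈ Z, nf z = z)
    (hcl : ∀ u ∈ st, RuleStep Z u → u ∈ Z) :
    ∀ {u : Term}, TD Z u → nf u ∈ st → nf u ∈ Z := by
  intro u h
  induction h with
  | mk u g hk hp hs ha nz hg hhk hhp1 hhp2 hhs1 hhs2 hha1 hha2 hpar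
      ihk ihp1 ihp2 ihs1 ihs2 iha1 iha2 =>
    intro hw
    by_cases hz : nf u = Term.zero
    · rw [hz] at hw ⊢
      exact zero_in_Z hcl hw
    have hnfw : nf (nf u) = nf u := nf_idem u
    have hparw : ∀ a : Term, (mnf (nf u)).count a % 2 =
        (flatn g ++ hOf hk hp hs ha nz).count a % 2 := by
      intro a; rw [count_mnf_nf u hz a]; exact hpar a
    have hfacw : mnf (nf u) = facL (nf u) := by
      rw [mnf, List.map_congr_left (factors_normalized hnfw), List.map_id']
    have hmemst : ∀ f ∈ mnf (nf u), f ∈ st := by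
      rw [hfacw]
      intro f hf
      exact hstc (nf u) hw f (factor_subterm hf)
    set hh := hOf hk hp hs ha nz with hhdef
    set hh' := hh.filter (fun f => decide (f ∈ st)) with hh'def
    have hh'mem : ∀ f ∈ hh', f ∈ hh ∧ f ∈ st := by
      intro f hf
      have := List.mem_filter.1 hf
      exact ⟨this.1, of_decide_eq_true this.2⟩
    have hh'Z : ∀ f ∈ hh', f ∈ Z := by
      intro f hf
      obtain ⟨hfh, hfst⟩ := hh'mem f hf
      rw [hhdef] at hfh
      simp only [hOf, List.mem_append, List.mem_map, List.mem_replicate] at hfh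
      rcases hfh with ((((⟨-, rfl⟩ | ⟨k, hk', rfl⟩) | ⟨p, hp', rfl⟩) | ⟨p, hp', rfl⟩) |
        ⟨p, hp', rfl⟩)
      · exact zero_in_Z hcl hfst
      · have h1 : Term.name k ∈ st := hstc _ hfst _ (Subterm.pk (Subterm.refl _))
        have h2 := ihk k hk'
        rw [nf_name] at h2
        exact hcl _ hfst (RuleStep.pkR (h2 h1))
      · have h1 := ihp1 p hp' (hstc _ hfst _ (Subterm.pair_l (Subterm.refl _)))
        have h2 := ihp2 p hp' (hstc _ hfst _ (Subterm.pair_r (Subterm.refl _)))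
        exact hcl _ hfst (RuleStep.pairR h1 h2)
      · have h1 := ihs1 p hp' (hstc _ hfst _ (Subterm.senc_l (Subterm.refl _)))
        have h2 := ihs2 p hp' (hstc _ hfst _ (Subterm.senc_r (Subterm.refl _)))
        exact hcl _ hfst (RuleStep.sencR h1 h2)
      · have h1 := iha1 p hp' (hstc _ hfst _ (Subterm.aenc_l (Subterm.refl _)))
        have h2 := iha2 p hp'
        rw [nf_pk, nf_name] at h2
        exact hcl _ hfst (RuleStep.aencR h1 (h2 (hstc _ hfst _ (Subterm.aenc_r (Subterm.refl _)))))
    have hgZ : ∀ e ∈ g ++ hh', e ∈ Z := by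
      intro e he
      rcases List.mem_append.1 he with h | h
      exacts [hg e h, hh'Z e h]
    have hh'std : ∀ f ∈ hh', f.IsStandard ∧ nf f = f := by
      intro f hf
      have h1 := (hh'mem f hf).1
      rw [hhdef] at h1
      exact hOf_std hk hp hs ha nz f h1
    have hflathh' : flatn hh' = hh' := by
      rw [flatn, flat_of_standard (fun s hs => (hh'std s hs).1),
        List.map_congr_left (fun s hs => (hh'std s hs).2), List.map_id']
    have hparfin : ∀ a : Term, (flatn (g ++ hh')).count a % 2 = (mnf (nf u)).count a % 2 := by
      intro a
      rw [flatn_append, hflathh', List.count_append]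
      have hpw := hparw a
      rw [List.count_append] at hpw
      by_cases hast : a ∈ st
      · have : hh'.count a = hh.count a := by
          rw [hh'def]
          exact count_filter_pos (decide_eq_true hast) hh
        omega
      · have hz1 : hh'.count a = 0 :=
          List.count_eq_zero.2 (fun hmem => hast (hh'mem a hmem).2)
        have hz2 : (flatn g).count a = 0 :=
          List.count_eq_zero.2 (fun hmem => hast (flatn_g_elem hstc hZst hZnorm hg a hmem).1)
        have hz3 : (mnf (nf u)).count a = 0 :=
          List.count_eq_zero.2 (fun hmem => hast (hmemst a hmem))
        omega
    have hxoreq : nf (.xor (g ++ hh')) = nf u := by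
      rw [nf_xor', Rl_eq_of_parity hparfin, xorOf_Rl_mnf hnfw]
    have hrs := RuleStep.xorR (Y := Z) (l := g ++ hh') hgZ
    rw [hxoreq] at hrs
    exact hcl _ hw hrs

end Absorb

section Main

variable {Z st : Set Term}

theorem TD_standard_decomp (hstc : ∀ u ∈ st, ∀ w, Subterm w u → w ∈ st)
    (hZst : Z ⊆ st) (hZnorm : ∀ z ∈ Z, nf z = z)
    {v : Term} (hTD : TD Z v) (hstd : v.IsStandard) (hn : nf v = v) :
    v ∈ st ∨
      (∃ k : ℕ, v = .pk (.name k) ∧ TD Z (.name k)) ∨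
      (∃ p : Term × Term, v = .pair (nf p.1) (nf p.2) ∧ TD Z p.1 ∧ TD Z p.2) ∨
      (∃ p : Term × Term, v = .senc (nf p.1) (nf p.2) ∧ TD Z p.1 ∧ TD Z p.2) ∨
      (∃ p : Term × ℕ, v = .aenc (nf p.1) (.pk (.name p.2)) ∧ TD Z p.1 ∧
        TD Z (.pk (.name p.2))) ∨
      v = Term.zero := by
  cases hTD with
  | mk u g hk hp hs ha nz hg h1 h2 h3 h4 h5 h6 h7 hpar =>
  have hv := hpar v
  rw [mnf_std hstd, hn, List.count_singleton, if_pos (beq_self_eq_true v)] at hv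
  have hmem : v ∈ flatn g ++ hOf hk hp hs ha nz := by
    rw [← List.count_pos_iff]
    omega
  rcases List.mem_append.1 hmem with hmg | hmh
  · exact Or.inl (flatn_g_elem hstc hZst hZnorm hg v hmg).1
  · simp only [hOf, List.mem_append, List.mem_map, List.mem_replicate] at hmh
    rcases hmh with ((((⟨-, rfl⟩ | ⟨k, hk', rfl⟩) | ⟨p, hp', rfl⟩) | ⟨p, hp', rfl⟩) |
      ⟨p, hp', rfl⟩)
    · exact Or.inr (Or.inr (Or.inr (Or.inr (Or.inr rfl))))
    · exact Or.inr (Or.inl ⟨k, rfl, h1 k hk'⟩)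
    · exact Or.inr (Or.inr (Or.inl ⟨p, rfl, h2 p hp', h3 p hp'⟩))
    · exact Or.inr (Or.inr (Or.inr (Or.inl ⟨p, rfl, h4 p hp', h5 p hp'⟩)))
    · exact Or.inr (Or.inr (Or.inr (Or.inr (Or.inl ⟨p, rfl, h6 p hp', h7 p hp'⟩))))

theorem IsProof_TD (hstc : ∀ u ∈ st, ∀ w, Subterm w u → w ∈ st)
    (hZst : Z ⊆ st) (hZnorm : ∀ z ∈ Z, nf z = z)
    (hcl : ∀ u ∈ st, RuleStep Z u → u ∈ Z)
    {X : Set Term} (hXZ : X ⊆ Z) :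
    ∀ {π : PTree}, IsProof X π → TD Z π.conc := by
  intro π h
  induction h with
  | ax hmem hnf => exact TD_zmem (hXZ hmem)
  | @split1 t u δ hδ hc ih =>
    have hc' : nf (.pair t u) = .pair t u := by
      have := IsProof_conc_nf hδ; rwa [hc] at this
    rw [hc] at ih
    show TD Z t
    rcases TD_standard_decomp hstc hZst hZnorm ih (by simp [Term.IsStandard]) hc' with
      hst | ⟨k, hek, -⟩ | ⟨p, hep, hp1, -⟩ | ⟨p, hep, -, -⟩ | ⟨p, hep, -, -⟩ | hzero
    · have hZ : Term.pair t u ∈ Z := by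
        have := TD_absorb hstc hZst hZnorm hcl ih
        rw [hc'] at this
        exact this hst
      have htst : t ∈ st := hstc _ hst _ (Subterm.pair_l (Subterm.refl _))
      exact TD_zmem (hcl _ htst (RuleStep.split1 hZ))
    · simp at hek
    · injection hep with he1 he2
      rw [he1]; exact TD_nf hp1
    · simp at hep
    · simp at hep
    · simp [Term.zero] at hzero
  | @split2 t u δ hδ hc ih =>
    have hc' : nf (.pair t u) = .pair t u := by
      have := IsProof_conc_nf hδ; rwa [hc] at this
    rw [hc] at ih
    show TD Z u
    rcases TD_standard_decomp hstc hZst hZnorm ih (by simp [Term.IsStandard]) hc' with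
      hst | ⟨k, hek, -⟩ | ⟨p, hep, -, hp2⟩ | ⟨p, hep, -, -⟩ | ⟨p, hep, -, -⟩ | hzero
    · have hZ : Term.pair t u ∈ Z := by
        have := TD_absorb hstc hZst hZnorm hcl ih
        rw [hc'] at this
        exact this hst
      have hust : u ∈ st := hstc _ hst _ (Subterm.pair_r (Subterm.refl _))
      exact TD_zmem (hcl _ hust (RuleStep.split2 hZ))
    · simp at hek
    · injection hep with he1 he2
      rw [he2]; exact TD_nf hp2
    · simp at hep
    · simp at hep
    · simp [Term.zero] at hzero
  | @sdec t v δ₁ δ₂ hδ1 hδ2 hc1 hc2 ih1 ih2 =>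
    have hc1' : nf (.senc t v) = .senc t v := by
      have := IsProof_conc_nf hδ1; rwa [hc1] at this
    rw [hc1] at ih1
    rw [hc2] at ih2
    show TD Z t
    rcases TD_standard_decomp hstc hZst hZnorm ih1 (by simp [Term.IsStandard]) hc1' with
      hst | ⟨k, hek, -⟩ | ⟨p, hep, -, -⟩ | ⟨p, hep, hp1, -⟩ | ⟨p, hep, -, -⟩ | hzero
    · have hZ : Term.senc t v ∈ Z := by
        have := TD_absorb hstc hZst hZnorm hcl ih1
        rw [hc1'] at this
        exact this hst
      have hvst : v ∈ st := hstc _ hst _ (Subterm.senc_r (Subterm.refl _))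
      have hvn : nf v = v := by
        rw [nf_senc, Term.senc.injEq] at hc1'; exact hc1'.2
      have hvZ : v ∈ Z := by
        have := TD_absorb hstc hZst hZnorm hcl ih2
        rw [hvn] at this
        exact this hvst
      have htst : t ∈ st := hstc _ hst _ (Subterm.senc_l (Subterm.refl _))
      exact TD_zmem (hcl _ htst (RuleStep.sdec hZ hvZ))
    · simp at hek
    · simp at hep
    · injection hep with he1 he2
      rw [he1]; exact TD_nf hp1
    · simp at hep
    · simp [Term.zero] at hzero
  | @adec t k δ₁ δ₂ hδ1 hδ2 hc1 hc2 ih1 ih2 =>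
    have hc1' : nf (.aenc t (.pk (.name k))) = .aenc t (.pk (.name k)) := by
      have := IsProof_conc_nf hδ1; rwa [hc1] at this
    rw [hc1] at ih1
    rw [hc2] at ih2
    show TD Z t
    rcases TD_standard_decomp hstc hZst hZnorm ih1 (by simp [Term.IsStandard]) hc1' with
      hst | ⟨k', hek, -⟩ | ⟨p, hep, -, -⟩ | ⟨p, hep, -, -⟩ | ⟨p, hep, hp1, -⟩ | hzero
    · have hZ : Term.aenc t (.pk (.name k)) ∈ Z := by
        have := TD_absorb hstc hZst hZnorm hcl ih1
        rw [hc1'] at this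
        exact this hst
      have hpkst : Term.pk (.name k) ∈ st := hstc _ hst _ (Subterm.aenc_r (Subterm.refl _))
      have hkst : Term.name k ∈ st := hstc _ hpkst _ (Subterm.pk (Subterm.refl _))
      have hkZ : Term.name k ∈ Z := by
        have := TD_absorb hstc hZst hZnorm hcl ih2
        rw [nf_name] at this
        exact this hkst
      have htst : t ∈ st := hstc _ hst _ (Subterm.aenc_l (Subterm.refl _))
      exact TD_zmem (hcl _ htst (RuleStep.adec hZ hkZ))
    · simp at hek
    · simp at hep
    · simp at hep
    · injection hep with he1 he2
      rw [he1]; exact TD_nf hp1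
    · simp [Term.zero] at hzero
  | @pkR k δ hδ hc ih =>
    rw [hc] at ih
    exact TD_pk ih
  | pairR hδ1 hδ2 ih1 ih2 => exact TD_pair ih1 ih2
  | sencR hδ1 hδ2 ih1 ih2 => exact TD_senc ih1 ih2
  | @aencR k δ₁ δ₂ hδ1 hδ2 hc2 ih1 ih2 =>
    rw [hc2] at ih2
    exact TD_aenc ih1 ih2
  | @xorR l hl ih =>
    show TD Z (nf (.xor (l.map PTree.conc)))
    refine TD_xor ?_
    intro s hs
    obtain ⟨δ, hδl, rfl⟩ := List.mem_map.1 hs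
    exact ih δ hδl

end Main

/-- Let `X ∪ {t}` be a finite normalized set of terms, let
`st := st(X ∪ {t})` and `N := |st|`. With
`one-step(Y) := Y ∪ {u ∈ st | u is the conclusion of a rule instance all of
whose premises lie in Y}`, `Y_0 := X` and `Y_{i+1} := one-step(Y_i)`, we have
`Y_i = Y_N` for all `i ≥ N`, and `X ⊢_dy t` iff `t ∈ Y_N`. -/
theorem oneStep_fixpoint_characterization (X : Set Term) (t : Term)
    (hfin : (X ∪ {t}).Finite)
    (hnorm : ∀ u ∈ X ∪ {t}, nf u = u) :
    (∀ i : ℕ, (stSet (X ∪ {t})).ncard ≤ i →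
      (oneStep (stSet (X ∪ {t})))^[i] X =
        (oneStep (stSet (X ∪ {t})))^[(stSet (X ∪ {t})).ncard] X) ∧
    (Derives X t ↔
      t ∈ (oneStep (stSet (X ∪ {t})))^[(stSet (X ∪ {t})).ncard] X) := by
  have hXst : X ⊆ stSet (X ∪ {t}) := fun u hu => mem_stSet_self (Or.inl hu)
  have hstfin : (stSet (X ∪ {t})).Finite := stSet_finite hfin
  have hpart1 := iterate_eq_of_ge (st := stSet (X ∪ {t})) (X := X) hXst hstfin
  refine ⟨hpart1, ?_, ?_⟩
  · rintro ⟨π, hπ, hc⟩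
    set st := stSet (X ∪ {t}) with hstdef
    set N := st.ncard with hNdef
    set Z := (oneStep st)^[N] X with hZdef
    have hZst : Z ⊆ st := by
      intro u hu
      rcases iterate_subset_st hXst N hu with h | h
      · exact h
      · exact hXst h
    have hstc : ∀ u ∈ st, ∀ w, Subterm w u → w ∈ st :=
      fun u hu w hw => mem_stSet_of_subterm hu hw
    have hZnorm : ∀ z ∈ Z, nf z = z := by
      intro z hz
      obtain ⟨s, hsmem, hsub⟩ := hZst hz
      exact subterm_normalized hsub (hnorm s hsmem)
    have hcl : ∀ u ∈ st, RuleStep Z u → u ∈ Z := by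
      intro u hust hrs
      have h1 : u ∈ oneStep st Z := Or.inr ⟨hust, hrs⟩
      have h2 : oneStep st ((oneStep st)^[N] X) = (oneStep st)^[N + 1] X :=
        (Function.iterate_succ_apply' (oneStep st) N X).symm
      rw [hZdef, h2, hpart1 (N + 1) (by omega)] at h1
      exact h1
    have hXZ : X ⊆ Z := by
      have := iterate_le_subset (st := st) (X := X) (Nat.zero_le N)
      rwa [Function.iterate_zero_apply] at this
    have hTD := IsProof_TD hstc hZst hZnorm hcl hXZ hπ
    rw [hc] at hTD
    have habs := TD_absorb hstc hZst hZnorm hcl hTD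
    rw [hnorm t (Or.inr rfl)] at habs
    exact habs (mem_stSet_self (Or.inr rfl))
  · intro hmem
    exact derives_of_mem_iterate (fun u hu => hnorm u (Or.inl hu)) _ t hmem

end DYXor
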